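/- Let x be half an odd integer with x ≥ e^100 and let c = 1 + 1/log(x). Then Λ(⌊x⌋)·(x/⌊x⌋)^c·|log(x/⌊x⌋)|^{−1} + Λ(⌊x⌋+1)·(x/(⌊x⌋+1))^c·|log(x/(⌊x⌋+1))|^{−1} < (4 + 10^{−20})·x·log(x). -/

import Mathlib

lemma my_log_one_add_ge {t : ℝ} (ht : 0 < t) : t / (1 + t) ≤ Real.log (1 + t) := by
  have h1 : (0:ℝ) < 1 + t := by linarith
  have h2 := Real.log_le_sub_one_of_pos (show (0:ℝ) < (1+t)⁻¹ by positivity)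
  rw [Real.log_inv] at h2
  have h3 : (1+t)⁻¹ - 1 = -(t/(1+t)) := by field_simp; ring
  rw [h3] at h2
  linarith

lemma my_exp_le {s : ℝ} (h0 : 0 ≤ s) (h : s ≤ 1/2) : Real.exp s ≤ 1 + 2*s := by
  have h1 : 1 - s ≤ Real.exp (-s) := by linarith [Real.add_one_le_exp (-s)]
  rw [Real.exp_neg] at h1
  have hp := Real.exp_pos s
  have h2 : (1 - s) * Real.exp s ≤ 1 := by
    have := mul_le_mul_of_nonneg_right h1 hp.le
    rwa [inv_mul_cancel₀ hp.ne'] at this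
  nlinarith

set_option maxHeartbeats 1000000 in
/-- The bound on the partial sum `S₃` (the terms `n = ⌊x⌋` and `n = ⌊x⌋ + 1`)
in the proof of the paper's main lemma. -/
theorem S3_bound (x : ℝ) (hx : ∃ m : ℕ, x = m + 1 / 2) (hx2 : x ≥ Real.exp 100) :
    let c : ℝ := 1 + 1 / Real.log x
    ArithmeticFunction.vonMangoldt ⌊x⌋₊ * (x / ⌊x⌋₊) ^ c * |Real.log (x / ⌊x⌋₊)|⁻¹ +
      ArithmeticFunction.vonMangoldt (⌊x⌋₊ + 1) * (x / (⌊x⌋₊ + 1)) ^ c *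
        |Real.log (x / (⌊x⌋₊ + 1))|⁻¹ <
      (4 + 10 ^ (-(20 : ℝ))) * x * Real.log x := by
  intro c
  obtain ⟨m, hm⟩ := hx
  have hx21 : (10:ℝ)^(21:ℕ) ≤ x := by
    calc (10:ℝ)^(21:ℕ) ≤ 2^(100:ℕ) := by norm_num
    _ ≤ Real.exp 1 ^ (100:ℕ) := by
        apply pow_le_pow_left₀ (by norm_num)
        linarith [Real.exp_one_gt_d9]
    _ = Real.exp 100 := by
        rw [← Real.exp_nat_mul]; norm_num
    _ ≤ x := hx2
  have hx0 : (0:ℝ) < x := lt_of_lt_of_le (by positivity) hx21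
  have hlog : (100:ℝ) ≤ Real.log x := by
    rw [Real.le_log_iff_exp_le hx0]; exact hx2
  have hlog0 : (0:ℝ) < Real.log x := by linarith
  have hmge : (10:ℝ)^(21:ℕ) - 1 ≤ (m:ℝ) := by linarith
  have hfloor : ⌊x⌋₊ = m := by
    rw [Nat.floor_eq_iff hx0.le]
    exact ⟨by linarith, by linarith⟩
  rw [hfloor]
  push_cast
  set M : ℝ := (m : ℝ) with hM
  -- now hm : x = M + 1/2 and the goal is in terms of M
  have hM0 : (0:ℝ) < M := by linarith [hmge]
  have hM2 : (2:ℝ) ≤ M := by linarith [hmge]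
  -- c bounds
  have hc1 : (1:ℝ) ≤ c := by
    have : (0:ℝ) ≤ 1 / Real.log x := by positivity
    simp only [c]; linarith
  have hc2 : c ≤ 101/100 := by
    have : 1 / Real.log x ≤ 1/100 :=
      div_le_div_of_nonneg_left (by norm_num) (by norm_num) hlog
    simp only [c]; linarith
  -- term 1 pieces
  have hxM : x / M = 1 + 1/(2*M) := by
    rw [hm]; field_simp
  have hL1lb : 1/(2*x) ≤ Real.log (x / M) := by
    rw [hxM]
    have h := my_log_one_add_ge (show (0:ℝ) < 1/(2*M) by positivity)
    have heq : (1/(2*M)) / (1 + 1/(2*M)) = 1/(2*x) := by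
      rw [hm]; field_simp
    linarith [heq ▸ h]
  have hL1ub : Real.log (x / M) ≤ 1/(2*M) := by
    have h1 := Real.log_le_sub_one_of_pos (show (0:ℝ) < x/M by positivity)
    have h2 : x/M - 1 = 1/(2*M) := by rw [hxM]; ring
    linarith
  have hL1pos : 0 < Real.log (x / M) := by
    have : (0:ℝ) < 1/(2*x) := by positivity
    linarith
  have hinv1 : |Real.log (x / M)|⁻¹ ≤ 2*x := by
    rw [abs_of_pos hL1pos, inv_le_comm₀ hL1pos (by positivity)]
    calc (2*x)⁻¹ = 1/(2*x) := by rw [one_div]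
    _ ≤ Real.log (x/M) := hL1lb
  have hpow1 : (x / M) ^ c ≤ 1 + 2/M := by
    rw [Real.rpow_def_of_pos (by positivity)]
    have hs : Real.log (x/M) * c ≤ 1/M := by
      have h1 : Real.log (x/M) * c ≤ (1/(2*M)) * (101/100) :=
        mul_le_mul hL1ub hc2 (by linarith) (by positivity)
      have h2 : (1/(2*M)) * (101/100) ≤ 1/M := by
        rw [div_mul_eq_mul_div, div_le_div_iff₀ (by positivity) hM0]; nlinarith
      linarith
    have hs0 : (0:ℝ) ≤ 1/M := by positivity
    calc Real.exp (Real.log (x/M) * c) ≤ Real.exp (1/M) := Real.exp_le_exp.mpr hs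
    _ ≤ 1 + 2*(1/M) := my_exp_le hs0 (by rw [div_le_div_iff₀ hM0 (by norm_num)]; linarith)
    _ = 1 + 2/M := by ring
  have hpow1' : (0:ℝ) ≤ (x / M) ^ c := Real.rpow_nonneg (by positivity) c
  have hΛ1 : ArithmeticFunction.vonMangoldt m ≤ Real.log x := by
    have h := ArithmeticFunction.vonMangoldt_le_log (n := m)
    rw [← hM] at h
    calc ArithmeticFunction.vonMangoldt m ≤ Real.log M := h
    _ ≤ Real.log x := Real.log_le_log hM0 (by linarith)
  have hΛ1' : (0:ℝ) ≤ ArithmeticFunction.vonMangoldt m := ArithmeticFunction.vonMangoldt_nonneg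
  -- term 2 pieces
  have hΛ2 : ArithmeticFunction.vonMangoldt (m+1) ≤ Real.log x + 1/(2*x) := by
    have h := ArithmeticFunction.vonMangoldt_le_log (n := m+1)
    push_cast at h
    rw [← hM] at h
    have h1 : Real.log (M+1) - Real.log x = Real.log ((M+1)/x) := by
      rw [Real.log_div (by linarith) hx0.ne']
    have h2 : Real.log ((M+1)/x) ≤ (M+1)/x - 1 :=
      Real.log_le_sub_one_of_pos (by positivity)
    have h3 : (M+1)/x - 1 = 1/(2*x) := by
      rw [hm]; field_simp; ring
    linarith
  have hΛ2' : (0:ℝ) ≤ ArithmeticFunction.vonMangoldt (m+1) := ArithmeticFunction.vonMangoldt_nonneg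
  have hpow2 : (x / (M+1)) ^ c ≤ 1 := by
    apply Real.rpow_le_one (by positivity) _ (by linarith)
    rw [div_le_one (by linarith)]; linarith
  have hpow2' : (0:ℝ) ≤ (x / (M+1)) ^ c := Real.rpow_nonneg (by positivity) c
  have hL2 : Real.log (x/(M+1)) = -Real.log ((M+1)/x) := by
    rw [← Real.log_inv]; congr 1
    rw [inv_div]
  have hL2lb : 1/(2*x+1) ≤ Real.log ((M+1)/x) := by
    have heq : (M+1)/x = 1 + 1/(2*x) := by
      rw [hm]; field_simp; ring
    rw [heq]
    have h := my_log_one_add_ge (show (0:ℝ) < 1/(2*x) by positivity)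
    have heq2 : (1/(2*x)) / (1 + 1/(2*x)) = 1/(2*x+1) := by
      field_simp
    linarith [heq2 ▸ h]
  have hL2pos : 0 < Real.log ((M+1)/x) := by
    have : (0:ℝ) < 1/(2*x+1) := by positivity
    linarith
  have hinv2 : |Real.log (x/(M+1))|⁻¹ ≤ 2*x+1 := by
    rw [hL2, abs_neg, abs_of_pos hL2pos, inv_le_comm₀ hL2pos (by positivity)]
    calc (2*x+1)⁻¹ = 1/(2*x+1) := by rw [one_div]
    _ ≤ Real.log ((M+1)/x) := hL2lb
  -- assemble
  have habs1 : (0:ℝ) ≤ |Real.log (x / M)|⁻¹ := by positivity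
  have habs2 : (0:ℝ) ≤ |Real.log (x / (M+1))|⁻¹ := by positivity
  have hT1 : ArithmeticFunction.vonMangoldt m * (x / M) ^ c * |Real.log (x / M)|⁻¹ ≤
      Real.log x * (1 + 2/M) * (2*x) := by
    apply mul_le_mul _ hinv1 habs1 (by positivity)
    exact mul_le_mul hΛ1 hpow1 hpow1' hlog0.le
  have hT2 : ArithmeticFunction.vonMangoldt (m+1) * (x / (M+1)) ^ c *
      |Real.log (x / (M+1))|⁻¹ ≤ (Real.log x + 1/(2*x)) * 1 * (2*x+1) := by
    apply mul_le_mul _ hinv2 habs2 (by positivity)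
    exact mul_le_mul hΛ2 hpow2 hpow2' (by positivity)
  have hε : (10:ℝ) ^ (-(20:ℝ)) = ((10:ℝ)^(20:ℕ))⁻¹ := by
    rw [Real.rpow_neg (by norm_num), ← Real.rpow_natCast]
    norm_num
  have hεx : (10:ℝ) ≤ ((10:ℝ)^(20:ℕ))⁻¹ * x := by
    have h1 : ((10:ℝ)^(20:ℕ))⁻¹ * (10:ℝ)^(21:ℕ) = 10 := by norm_num
    have h2 := mul_le_mul_of_nonneg_left hx21
      (show (0:ℝ) ≤ ((10:ℝ)^(20:ℕ))⁻¹ by positivity)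
    rw [h1] at h2
    exact h2
  have hεxL : 10 * Real.log x ≤ ((10:ℝ)^(20:ℕ))⁻¹ * x * Real.log x :=
    mul_le_mul_of_nonneg_right hεx hlog0.le
  have h4x : 4*x/M * Real.log x ≤ 8 * Real.log x := by
    apply mul_le_mul_of_nonneg_right _ hlog0.le
    rw [div_le_iff₀ hM0]; linarith
  have hA : Real.log x * (1 + 2/M) * (2*x) = 2*x*Real.log x + 4*x/M * Real.log x := by
    field_simp; ring
  have hB : (Real.log x + 1/(2*x)) * 1 * (2*x+1) =
      2*x*Real.log x + Real.log x + 1 + 1/(2*x) := by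
    field_simp; ring
  have h1x : 1/(2*x) ≤ 1 := by
    rw [div_le_one (by linarith)]; linarith
  calc ArithmeticFunction.vonMangoldt m * (x / M) ^ c * |Real.log (x / M)|⁻¹ +
        ArithmeticFunction.vonMangoldt (m+1) * (x / (M+1)) ^ c * |Real.log (x / (M+1))|⁻¹ ≤
      Real.log x * (1 + 2/M) * (2*x) + (Real.log x + 1/(2*x)) * 1 * (2*x+1) :=
        add_le_add hT1 hT2
    _ < (4 + ((10:ℝ)^(20:ℕ))⁻¹) * x * Real.log x := by
        rw [hA, hB]; linarith [hεxL, h4x, hlog, h1x, hlog0, hx0]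
    _ = (4 + 10 ^ (-(20:ℝ))) * x * Real.log x := by rw [hε]
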